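/- Let a, b, c be positive integers with b ≥ 2, a² ≤ c·b², and sqrt(a² + b²) + 3 ≤ c, and let f(x) = (c − x)·((a − x)² + b²) + 1. Let ω₁ be the unique real root of f and ω₂ a nonreal root of f. Then ω₁ > 2 and |ω₂| ≤ ω₁ − 2. -/

import Mathlib

set_option maxHeartbeats 1000000 in
theorem roots_gap_two (a b c : ℕ) (ha : 0 < a) (hb : 2 ≤ b) (hc : 0 < c)
    (habc : (a : ℝ) ^ 2 ≤ (c : ℝ) * (b : ℝ) ^ 2)
    (hsqrt : Real.sqrt ((a : ℝ) ^ 2 + (b : ℝ) ^ 2) + 3 ≤ (c : ℝ))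
    (f : ℂ → ℂ)
    (hf : f = fun x => ((c : ℂ) - x) * (((a : ℂ) - x) ^ 2 + (b : ℂ) ^ 2) + 1)
    (ω₁ : ℝ) (hω₁ : f (ω₁ : ℂ) = 0)
    (ω₂ : ℂ) (hω₂ : f ω₂ = 0) (him : ω₂.im ≠ 0) :
    2 < ω₁ ∧ ‖ω₂‖ ≤ ω₁ - 2 := by
  have hb2 : (2:ℝ) ≤ (b:ℝ) := by exact_mod_cast hb
  have hs0 : 0 ≤ Real.sqrt ((a : ℝ) ^ 2 + (b : ℝ) ^ 2) := Real.sqrt_nonneg _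
  have hs2 : Real.sqrt ((a : ℝ) ^ 2 + (b : ℝ) ^ 2) ^ 2 = (a:ℝ)^2 + (b:ℝ)^2 :=
    Real.sq_sqrt (by positivity)
  -- real root equation
  have h1 : ((c:ℝ) - ω₁) * (((a:ℝ) - ω₁)^2 + (b:ℝ)^2) + 1 = 0 := by
    have h := hω₁
    rw [hf] at h
    simp only at h
    exact_mod_cast h
  have hωc : (c:ℝ) < ω₁ := by
    nlinarith [sq_nonneg ((a:ℝ) - ω₁)]
  -- the quadratic satisfied by ω₂
  have hne : (ω₁:ℂ) ≠ ω₂ := by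
    intro h; apply him; rw [← h]; simp
  have key : ω₂^2 + ω₂*(ω₁:ℂ) + (ω₁:ℂ)^2 - ((c:ℂ)+2*(a:ℂ))*(ω₂+(ω₁:ℂ))
      + (2*(a:ℂ)*(c:ℂ)+(a:ℂ)^2+(b:ℂ)^2) = 0 := by
    have e1 := hω₁; have e2 := hω₂
    rw [hf] at e1 e2
    simp only at e1 e2
    have hd : ((ω₁:ℂ) - ω₂) * (ω₂^2 + ω₂*(ω₁:ℂ) + (ω₁:ℂ)^2
        - ((c:ℂ)+2*(a:ℂ))*(ω₂+(ω₁:ℂ)) + (2*(a:ℂ)*(c:ℂ)+(a:ℂ)^2+(b:ℂ)^2)) = 0 := by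
      linear_combination e2 - e1
    rcases mul_eq_zero.1 hd with h | h
    · exact absurd (sub_eq_zero.1 h) hne
    · exact h
  set u := ω₂.re with hu
  set v := ω₂.im with hv
  rw [Complex.ext_iff] at key
  obtain ⟨kre, kim⟩ := key
  simp only [pow_two, Complex.add_re, Complex.add_im, Complex.sub_re, Complex.sub_im,
    Complex.mul_re, Complex.mul_im, Complex.ofReal_re, Complex.ofReal_im,
    Complex.natCast_re, Complex.natCast_im, Complex.re_ofNat, Complex.im_ofNat,
    Complex.zero_re, Complex.zero_im] at kre kim
  have hfac : v * (2*u + ω₁ - ((c:ℝ)+2*(a:ℝ))) = 0 := by linear_combination kim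
  have hquad : 2*u + ω₁ - ((c:ℝ)+2*(a:ℝ)) = 0 := by
    rcases mul_eq_zero.1 hfac with h | h
    · exact absurd h him
    · exact h
  have habs2 : u^2 + v^2 = (ω₁ - (c:ℝ))*(ω₁ - 2*(a:ℝ)) + (a:ℝ)^2 + (b:ℝ)^2 := by
    linear_combination (-1) * kre + u * hquad
  have hprod : (ω₁ - (c:ℝ))*(ω₁ - 2*(a:ℝ)) ≤ 1 := by
    have h5 : (0:ℝ) ≤ (ω₁ - (c:ℝ)) * (((a:ℝ) - ω₁)^2 + (b:ℝ)^2 - (ω₁ - 2*(a:ℝ))) :=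
      mul_nonneg (by linarith) (by nlinarith [sq_nonneg (ω₁ - (a:ℝ) - 1/2)])
    nlinarith [h5]
  have hsq : ‖ω₂‖^2 = u^2 + v^2 := by
    rw [Complex.sq_norm, Complex.normSq_apply]; ring
  clear_value u v
  clear hf hω₁ hω₂ hne kre kim hfac f
  set s := Real.sqrt ((a : ℝ) ^ 2 + (b : ℝ) ^ 2) with hsdef
  have hω2 : 2 < ω₁ := by linarith
  refine ⟨hω2, ?_⟩
  have h3 : ‖ω₂‖^2 ≤ (ω₁ - 2)^2 := by
    have hmul : (s+1)*(s+1) ≤ (ω₁-2)*(ω₁-2) :=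
      mul_self_le_mul_self (by linarith) (by linarith)
    have e1 : ‖ω₂‖^2 ≤ s^2 + 1 := by
      rw [hsq]; linarith [habs2, hprod, hs2]
    have e2 : s^2 + 1 ≤ (ω₁-2)^2 := by nlinarith [hmul, hs0]
    linarith
  calc ‖ω₂‖ = Real.sqrt (‖ω₂‖^2) :=
        (Real.sqrt_sq (norm_nonneg _)).symm
    _ ≤ Real.sqrt ((ω₁-2)^2) := Real.sqrt_le_sqrt h3
    _ = ω₁ - 2 := Real.sqrt_sq (by linarith)
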